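/- Let X be a measurable space, ν a probability measure on X × ℝ with ∫ y² dν(x, y) < ∞ and X-marginal ν_X, let Θ be a measurable space with probability measure q, and let f : Θ × X → ℝ be jointly measurable with ∫∫ f(θ, x)² dq dν_X < ∞. Suppose the regression function is well specified: for some θ* ∈ Θ, the conditional expectation of Y given X = x under ν equals f(θ*, x) for ν_X-almost every x. Then ( ∫ |y − ∫_Θ f(θ, x) dq(θ)|² dν(x, y) − ∫ |y − f(θ*, x)|² dν(x, y) ) + ∫_X ∫_Θ |f(θ, x) − ∫_Θ f(θ', x) dq(θ')|² dq(θ) dν_X(x) = ∫_Θ ∫ |y − f(θ, x)|² dν(x, y) dq(θ) − ∫ |y − f(θ*, x)|² dν(x, y), i.e., PER⁽²⁾ + BER⁽²⁾ equals the excess risk ER⁽²⁾, and this common value is at most the total risk ∫_Θ ∫ |y − f(θ, x)|² dν dq. (Theorem 2 of the paper, unconditional version.) -/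

import Mathlib

open MeasureTheory
open scoped ProbabilityTheory


lemma aux_sq_int {α : Type*} [MeasurableSpace α] (μ : Measure α) [IsProbabilityMeasure μ]
    (F : α → ℝ) (hF : AEStronglyMeasurable F μ)
    (h2 : Integrable (fun a => F a ^ 2) μ) :
    (∫ a, F a ∂μ) ^ 2 ≤ ∫ a, F a ^ 2 ∂μ := by
  have h1 : Integrable F μ := by
    refine (h2.add (integrable_const 1)).mono' hF ?_
    filter_upwards with a
    simp only [Pi.add_apply, Real.norm_eq_abs]
    nlinarith [sq_nonneg (|F a| - 1), sq_abs (F a), abs_nonneg (F a)]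
  set c := ∫ a, F a ∂μ with hc
  have h0 : (0:ℝ) ≤ ∫ a, (F a - c) ^ 2 ∂μ := integral_nonneg fun a => sq_nonneg _
  have hexp : ∫ a, (F a - c) ^ 2 ∂μ = (∫ a, F a ^ 2 ∂μ) - 2 * c * c + c ^ 2 := by
    have he : ∀ a, (F a - c) ^ 2 = F a ^ 2 - (2 * c) * F a + c ^ 2 := fun a => by ring
    simp_rw [he]
    have hsub : Integrable (fun a => F a ^ 2 - 2 * c * F a) μ := h2.sub (h1.const_mul (2*c))
    rw [integral_add hsub (integrable_const _),
      integral_sub h2 (h1.const_mul (2*c)), integral_const_mul, integral_const]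
    simp [← hc]
  rw [hexp] at h0
  nlinarith

lemma aux_int_of_sq {α : Type*} [MeasurableSpace α] {μ : Measure α} [IsFiniteMeasure μ]
    {F : α → ℝ} (hF : AEStronglyMeasurable F μ)
    (h2 : Integrable (fun a => F a ^ 2) μ) : Integrable F μ := by
  refine (h2.add (integrable_const 1)).mono' hF ?_
  filter_upwards with a
  simp only [Pi.add_apply, Real.norm_eq_abs]
  nlinarith [sq_nonneg (|F a| - 1), sq_abs (F a), abs_nonneg (F a)]

lemma lift_fst {X : Type*} [MeasurableSpace X] (ν : Measure (X × ℝ))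
    {ψ : X → ℝ} (hm : AEStronglyMeasurable ψ ν.fst) (h : Integrable ψ ν.fst) :
    Integrable (fun z : X × ℝ => ψ z.1) ν := by
  have e : ν.fst = ν.map Prod.fst := rfl
  rw [e] at h hm
  exact (integrable_map_measure hm measurable_fst.aemeasurable).mp h

lemma lift_snd {Θ X : Type*} [MeasurableSpace Θ] [MeasurableSpace X]
    (q : Measure Θ) [IsProbabilityMeasure q] (μ : Measure X) [SFinite μ]
    {ψ : X → ℝ} (hm : AEStronglyMeasurable ψ μ) (h : Integrable ψ μ) :
    Integrable (fun p : Θ × X => ψ p.2) (q.prod μ) := by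
  have e : (q.prod μ).map Prod.snd = μ := by
    have : (q.prod μ).snd = (q.prod μ).map Prod.snd := rfl
    rw [← this, Measure.snd_prod]
  rw [← e] at h hm
  exact (integrable_map_measure hm measurable_snd.aemeasurable).mp h


/-- Theorem 2 of the paper, unconditional version.  `ν` is the joint
data-generating distribution of input–output pairs `(X, Y)` with finite second
moment of `Y`; `ν.fst` is its `X`-marginal and `ν.condKernel x` the conditional
distribution of `Y` given `X = x`; `q` is the posterior over parameters and
`f θ x` the model's prediction.  If the regression function is well specified
(`∫ y d(ν.condKernel x) = f θ* x` for `ν.fst`-a.e. `x`), then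
`PER⁽²⁾ + BER⁽²⁾ = ER⁽²⁾`, and this common value is at most the total risk. -/
theorem thm2_squared_loss_unconditional
    {X Θ : Type*} [MeasurableSpace X] [MeasurableSpace Θ]
    (ν : Measure (X × ℝ)) [IsProbabilityMeasure ν]
    (hν2 : Integrable (fun z : X × ℝ => z.2 ^ 2) ν)
    (q : Measure Θ) [IsProbabilityMeasure q]
    (f : Θ → X → ℝ) (hf_meas : Measurable (Function.uncurry f))
    (hf2 : Integrable (fun p : Θ × X => (f p.1 p.2) ^ 2) (q.prod ν.fst))
    (θs : Θ)
    (hws : ∀ᵐ x ∂ν.fst, ∫ y, y ∂(ν.condKernel x) = f θs x) :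
    -- PER⁽²⁾ + BER⁽²⁾ = ER⁽²⁾
    (((∫ z : X × ℝ, |z.2 - ∫ θ, f θ z.1 ∂q| ^ 2 ∂ν)
          - ∫ z : X × ℝ, |z.2 - f θs z.1| ^ 2 ∂ν)
        + ∫ x, ∫ θ, |f θ x - ∫ θ', f θ' x ∂q| ^ 2 ∂q ∂ν.fst
      = (∫ θ, ∫ z : X × ℝ, |z.2 - f θ z.1| ^ 2 ∂ν ∂q)
          - ∫ z : X × ℝ, |z.2 - f θs z.1| ^ 2 ∂ν)
    -- and the common value is at most the total risk
    ∧ (∫ θ, ∫ z : X × ℝ, |z.2 - f θ z.1| ^ 2 ∂ν ∂q)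
          - (∫ z : X × ℝ, |z.2 - f θs z.1| ^ 2 ∂ν)
        ≤ ∫ θ, ∫ z : X × ℝ, |z.2 - f θ z.1| ^ 2 ∂ν ∂q := by
  simp only [sq_abs]
  set κ := ν.condKernel with hκ
  have hdis : ν.fst ⊗ₘ κ = ν := ν.disintegrate ν.condKernel
  set g : X → ℝ := fun x => ∫ θ, f θ x ∂q with hg
  set m : X → ℝ := fun x => f θs x with hm
  -- measurability
  have hm_meas : Measurable m := hf_meas.of_uncurry_left
  have hg_sm : StronglyMeasurable g := hf_meas.stronglyMeasurable.integral_prod_left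
  -- a.e. facts about the conditional kernel
  have hν2c : Integrable (fun z : X × ℝ => z.2 ^ 2) (ν.fst ⊗ₘ κ) := by rw [hdis]; exact hν2
  have hae_sq : ∀ᵐ x ∂ν.fst, Integrable (fun y : ℝ => y ^ 2) (κ x) := by
    have := (Measure.integrable_compProd_iff hν2c.aestronglyMeasurable).mp hν2c
    exact this.1
  have hG_int : Integrable (fun x => ∫ y, y ^ 2 ∂(κ x)) ν.fst := by
    have := ((Measure.integrable_compProd_iff hν2c.aestronglyMeasurable).mp hν2c).2
    simpa [Real.norm_eq_abs, abs_pow, sq_abs] using this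
  have hae_y : ∀ᵐ x ∂ν.fst, Integrable (fun y : ℝ => y) (κ x) := by
    filter_upwards [hae_sq] with x hx
    exact aux_int_of_sq aestronglyMeasurable_id hx
  -- integrability of m^2 and g^2 over ν.fst
  have hm2 : Integrable (fun x => m x ^ 2) ν.fst := by
    refine hG_int.mono' (hm_meas.pow_const 2).aestronglyMeasurable ?_
    filter_upwards [hws, hae_sq] with x h1 h2
    rw [Real.norm_eq_abs, abs_of_nonneg (sq_nonneg _)]
    show f θs x ^ 2 ≤ _
    rw [← h1]
    exact aux_sq_int (κ x) _ aestronglyMeasurable_id h2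
  have hfx2_ae : ∀ᵐ x ∂ν.fst, Integrable (fun θ => f θ x ^ 2) q := hf2.prod_left_ae
  have hfq_int : Integrable (fun x => ∫ θ, f θ x ^ 2 ∂q) ν.fst := hf2.integral_prod_right
  have hg2 : Integrable (fun x => g x ^ 2) ν.fst := by
    refine hfq_int.mono' ((hg_sm.pow 2).aestronglyMeasurable) ?_
    filter_upwards [hfx2_ae] with x hx
    rw [Real.norm_eq_abs, abs_of_nonneg (sq_nonneg _)]
    show (∫ θ, f θ x ∂q) ^ 2 ≤ _
    exact aux_sq_int q _ (hf_meas.of_uncurry_right).aestronglyMeasurable hx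
  -- integrability of (z.2 - h z.1)^2 over ν
  have hint : ∀ (h : X → ℝ), AEStronglyMeasurable h ν.fst → Integrable (fun x => h x ^ 2) ν.fst →
      Integrable (fun z : X × ℝ => (z.2 - h z.1) ^ 2) ν := by
    intro h hhm hh2
    have hb : Integrable (fun z : X × ℝ => 2 * z.2 ^ 2 + 2 * h z.1 ^ 2) ν :=
      (hν2.const_mul 2).add
        ((lift_fst ν (hhm.pow 2) hh2).const_mul 2)
    refine hb.mono' ?_ ?_
    · have e : ν.fst = ν.map Prod.fst := rfl
      rw [e] at hhm
      have h1 : AEStronglyMeasurable (fun z : X × ℝ => h z.1) ν :=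
        hhm.comp_aemeasurable measurable_fst.aemeasurable
      exact (measurable_snd.aestronglyMeasurable.sub h1).pow 2
    · filter_upwards with z
      rw [Real.norm_eq_abs, abs_of_nonneg (sq_nonneg _)]
      nlinarith [sq_nonneg (z.2 + h z.1)]
  -- key bias-variance decomposition
  have key : ∀ (h : X → ℝ), AEStronglyMeasurable h ν.fst → Integrable (fun x => h x ^ 2) ν.fst →
      ∫ z : X × ℝ, (z.2 - h z.1) ^ 2 ∂ν
        = (∫ z : X × ℝ, (z.2 - m z.1) ^ 2 ∂ν) + ∫ x, (h x - m x) ^ 2 ∂ν.fst := by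
    intro h hhm hh2
    have hIh := hint h hhm hh2
    have hIm := hint m hm_meas.aestronglyMeasurable hm2
    have hD : Integrable (fun z : X × ℝ => (z.2 - h z.1) ^ 2 - (z.2 - m z.1) ^ 2) ν :=
      hIh.sub hIm
    have hDc : Integrable (fun z : X × ℝ => (z.2 - h z.1) ^ 2 - (z.2 - m z.1) ^ 2)
        (ν.fst ⊗ₘ κ) := by rw [hdis]; exact hD
    have hDval : ∫ z : X × ℝ, ((z.2 - h z.1) ^ 2 - (z.2 - m z.1) ^ 2) ∂ν
        = ∫ x, (h x - m x) ^ 2 ∂ν.fst := by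
      conv_lhs => rw [← hdis]
      rw [Measure.integral_compProd hDc]
      refine integral_congr_ae ?_
      filter_upwards [hws, hae_y] with x h1 h2
      show ∫ y, ((y - h x) ^ 2 - (y - m x) ^ 2) ∂(κ x) = _
      have he : ∀ y : ℝ, (y - h x) ^ 2 - (y - m x) ^ 2
          = (2 * (m x - h x)) * y + (h x ^ 2 - m x ^ 2) := fun y => by ring
      simp_rw [he]
      rw [integral_add (h2.const_mul _) (integrable_const _), integral_const_mul, integral_const]
      have hmx : ∫ y : ℝ, y ∂(κ x) = m x := h1
      rw [hmx]
      simp only [measure_univ, probReal_univ, ENNReal.toReal_one, one_smul]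
      ring
    rw [integral_sub hIh hIm] at hDval
    linarith
  set Rm := ∫ z : X × ℝ, (z.2 - m z.1) ^ 2 ∂ν with hRmdef
  have hg_meas : Measurable g := hg_sm.measurable
  -- product-level integrability
  have hm2p : Integrable (fun p : Θ × X => m p.2 ^ 2) (q.prod ν.fst) :=
    lift_snd q ν.fst (hm_meas.pow_const 2).aestronglyMeasurable hm2
  have hg2p : Integrable (fun p : Θ × X => g p.2 ^ 2) (q.prod ν.fst) :=
    lift_snd q ν.fst (hg_meas.pow_const 2).aestronglyMeasurable hg2
  have hsqbound : ∀ a b : ℝ, ‖(a - b) ^ 2‖ ≤ 2 * a ^ 2 + 2 * b ^ 2 := by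
    intro a b
    rw [Real.norm_eq_abs, abs_of_nonneg (sq_nonneg _)]
    nlinarith [sq_nonneg (a + b)]
  have hfmW : Integrable (fun p : Θ × X => (f p.1 p.2 - m p.2) ^ 2) (q.prod ν.fst) := by
    refine ((hf2.const_mul 2).add (hm2p.const_mul 2)).mono' ?_ ?_
    · exact ((hf_meas.sub (hm_meas.comp measurable_snd)).pow_const 2).aestronglyMeasurable
    · filter_upwards with p using hsqbound _ _
  have hfgW : Integrable (fun p : Θ × X => (f p.1 p.2 - g p.2) ^ 2) (q.prod ν.fst) := by
    refine ((hf2.const_mul 2).add (hg2p.const_mul 2)).mono' ?_ ?_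
    · exact ((hf_meas.sub (hg_meas.comp measurable_snd)).pow_const 2).aestronglyMeasurable
    · filter_upwards with p using hsqbound _ _
  -- total risk decomposition
  have hW : Integrable (fun θ => ∫ x, (f θ x - m x) ^ 2 ∂ν.fst) q := hfmW.integral_prod_left
  have hTot : ∫ θ, ∫ z : X × ℝ, (z.2 - f θ z.1) ^ 2 ∂ν ∂q
      = Rm + ∫ θ, ∫ x, (f θ x - m x) ^ 2 ∂ν.fst ∂q := by
    have hae : ∀ᵐ θ ∂q, ∫ z : X × ℝ, (z.2 - f θ z.1) ^ 2 ∂ν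
        = Rm + ∫ x, (f θ x - m x) ^ 2 ∂ν.fst := by
      filter_upwards [hf2.prod_right_ae] with θ hθ
      exact key (f θ) (hf_meas.of_uncurry_left).aestronglyMeasurable hθ
    rw [integral_congr_ae hae, integral_add (integrable_const _) hW, integral_const]
    simp only [measure_univ, probReal_univ, ENNReal.toReal_one, one_smul]
  have hswap : ∫ θ, ∫ x, (f θ x - m x) ^ 2 ∂ν.fst ∂q
      = ∫ x, ∫ θ, (f θ x - m x) ^ 2 ∂q ∂ν.fst :=
    integral_integral_swap hfmW
  -- pointwise variance decomposition over the posterior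
  have hptw : ∀ᵐ x ∂ν.fst, ∫ θ, (f θ x - m x) ^ 2 ∂q
      = (∫ θ, (f θ x - g x) ^ 2 ∂q) + (g x - m x) ^ 2 := by
    filter_upwards [hfx2_ae] with x hx
    have h1 : Integrable (fun θ => f θ x) q :=
      aux_int_of_sq (hf_meas.of_uncurry_right).aestronglyMeasurable hx
    have e1 : ∀ θ, (f θ x - m x) ^ 2 = f θ x ^ 2 - (2 * m x) * f θ x + m x ^ 2 :=
      fun θ => by ring
    have e2 : ∀ θ, (f θ x - g x) ^ 2 = f θ x ^ 2 - (2 * g x) * f θ x + g x ^ 2 :=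
      fun θ => by ring
    have hsub1 : Integrable (fun θ => f θ x ^ 2 - 2 * m x * f θ x) q :=
      hx.sub (h1.const_mul _)
    have hsub2 : Integrable (fun θ => f θ x ^ 2 - 2 * g x * f θ x) q :=
      hx.sub (h1.const_mul _)
    simp_rw [e1, e2]
    rw [integral_add hsub1 (integrable_const _), integral_sub hx (h1.const_mul _),
      integral_add hsub2 (integrable_const _), integral_sub hx (h1.const_mul _),
      integral_const_mul, integral_const_mul, integral_const]
    have hgx : ∫ θ, f θ x ∂q = g x := rfl
    rw [hgx]
    simp only [integral_const, measure_univ, probReal_univ, ENNReal.toReal_one, one_smul, mul_one]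
    ring
  have hBER_int : Integrable (fun x => ∫ θ, (f θ x - g x) ^ 2 ∂q) ν.fst :=
    hfgW.integral_prod_right
  have hPg_int : Integrable (fun x => (g x - m x) ^ 2) ν.fst := by
    refine ((hg2.const_mul 2).add (hm2.const_mul 2)).mono' ?_ ?_
    · exact ((hg_meas.sub hm_meas).pow_const 2).aestronglyMeasurable
    · filter_upwards with x using hsqbound _ _
  have hsplit : ∫ x, ∫ θ, (f θ x - m x) ^ 2 ∂q ∂ν.fst
      = (∫ x, ∫ θ, (f θ x - g x) ^ 2 ∂q ∂ν.fst) + ∫ x, (g x - m x) ^ 2 ∂ν.fst := by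
    rw [integral_congr_ae hptw, integral_add hBER_int hPg_int]
  have hRg : ∫ z : X × ℝ, (z.2 - g z.1) ^ 2 ∂ν = Rm + ∫ x, (g x - m x) ^ 2 ∂ν.fst :=
    key g hg_meas.aestronglyMeasurable hg2
  have hRm_nonneg : (0:ℝ) ≤ Rm := integral_nonneg fun z => sq_nonneg _
  constructor
  · rw [hTot, hswap, hsplit, hRg]
    ring
  · rw [hTot]
    linarith
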